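/- There do not exist real numbers a_x, b_x, a_y, b_y and s ∈ (0,1] such that all of the following hold: |a_x| + |b_x| = 1; |a_y| + |b_y| = 1; |a_x − a_y| + |b_x − b_y| = s; |a_x + a_y| + |b_x + b_y| = 2; for every β > 0, max{s, s·β, (s/2)·(β + 1)} ≤ |a_x − β·a_y| + |b_x − β·b_y|; and for every β > 0, max{s, s·β, (s/2)·(β + 1)} ≤ |a_y − β·a_x| + |b_y − β·b_x|. -/

import Mathlib

private lemma abs_lin (a b β : ℝ) (hab : |a + b| = |a| + |b|) (hβ : 0 ≤ β) :
    |a - β * b| = |(|a| - β * |b|)| := by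
  have h1 : a * b = |a| * |b| := by
    have h := congrArg (· ^ 2) hab
    nlinarith [sq_abs (a + b), sq_abs a, sq_abs b]
  have h2 : (a - β * b) ^ 2 = (|a| - β * |b|) ^ 2 := by
    linear_combination -sq_abs a - β ^ 2 * sq_abs b - 2 * β * h1
  rw [← Real.sqrt_sq_eq_abs, ← Real.sqrt_sq_eq_abs, h2]

private lemma aux (u v p q s : ℝ) (hv : 0 ≤ v) (hp : 0 ≤ p)
    (h1 : u + p = 1) (h2 : v + q = 1) (huv : v ≤ u)
    (hspos : 0 < s) (hs1 : s ≤ 1)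
    (hs : |u - v| + |p - q| = s)
    (hc1 : ∀ β : ℝ, 0 < β →
      max (max s (s * β)) (s / 2 * (β + 1)) ≤ |u - β * v| + |p - β * q|) :
    False := by
  have hpq : p ≤ q := by linarith
  have hsval : s = 2 * (u - v) := by
    rw [abs_of_nonneg (by linarith), abs_of_nonpos (by linarith)] at hs
    linarith
  have huv' : v < u := by nlinarith
  have hu1 : u ≤ 1 := by linarith
  rcases lt_trichotomy (u + v) 1 with hlt | heq | hgt
  · -- case u + v < 1 : take β = (p/q+1)/2 ∈ (p/q, 1)
    have hq : 0 < q := by linarith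
    set β : ℝ := (p / q + 1) / 2 with hβdef
    have hpq0 : 0 ≤ p / q := div_nonneg hp hq.le
    have hpqlt : p / q < 1 := (div_lt_one hq).2 (by linarith)
    have hβpos : 0 < β := by rw [hβdef]; linarith
    have hβ1 : β < 1 := by rw [hβdef]; linarith
    have hbq : β * q = (p + q) / 2 := by
      rw [hβdef, div_mul_eq_mul_div, add_mul, div_mul_cancel₀ _ hq.ne', one_mul]
    have hmain := le_trans (le_max_right _ _) (hc1 β hβpos)
    have e1 : |u - β * v| = u - β * v := abs_of_nonneg (by nlinarith)
    have e2 : |p - β * q| = β * q - p := by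
      rw [abs_of_nonpos (by linarith [hbq])]; ring
    rw [e1, e2, hbq] at hmain
    nlinarith [mul_pos (by linarith : (0:ℝ) < 1 - u - v) (by linarith : (0:ℝ) < 1 - β)]
  · -- case u + v = 1 : then p = v, q = u; take β = u / v
    have hv0 : 0 < v := by nlinarith
    set β : ℝ := u / v with hβdef
    have hβpos : 0 < β := div_pos (by linarith) hv0
    have hbv : β * v = u := by rw [hβdef, div_mul_cancel₀ _ hv0.ne']
    have hmain := le_trans (le_trans (le_max_right _ _) (le_max_left _ _)) (hc1 β hβpos)
    have e1 : |u - β * v| = 0 := by rw [hbv]; simp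
    have e2 : |p - β * q| = β * q - p := by
      rw [abs_of_nonpos ?_]
      · ring
      · rw [hβdef, div_mul_eq_mul_div, sub_nonpos, le_div_iff₀ hv0]
        nlinarith
    rw [e1, e2] at hmain
    have hm2 := mul_le_mul_of_nonneg_right hmain hv0.le
    nlinarith [hbv]
  · -- case u + v > 1 : take β = (1 + u/v)/2
    have hv0 : 0 < v := by linarith
    have hvlt1 : v < 1 := by linarith
    have hq : 0 < q := by linarith
    set β : ℝ := (1 + u / v) / 2 with hβdef
    have h1uv : 1 < u / v := (one_lt_div hv0).2 huv'
    have hβpos : 0 < β := by rw [hβdef]; linarith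
    have hβ1 : 1 < β := by rw [hβdef]; linarith
    have hbv : β * v = (v + u) / 2 := by
      rw [hβdef, div_mul_eq_mul_div, add_mul, one_mul, div_mul_cancel₀ _ hv0.ne']
    have hmain := le_trans (le_max_right _ _) (hc1 β hβpos)
    have e1 : |u - β * v| = u - β * v := abs_of_nonneg (by rw [hbv]; linarith)
    have e2 : |p - β * q| = β * q - p := by
      rw [abs_of_nonpos (by nlinarith)]; ring
    rw [e1, e2] at hmain
    nlinarith [mul_pos (by linarith : (0:ℝ) < u + v - 1) (by linarith : (0:ℝ) < β - 1)]

theorem no_solution_three_point_system :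
    ¬ ∃ (ax bx ay bY s : ℝ), 0 < s ∧ s ≤ 1 ∧
        |ax| + |bx| = 1 ∧
        |ay| + |bY| = 1 ∧
        |ax - ay| + |bx - bY| = s ∧
        |ax + ay| + |bx + bY| = 2 ∧
        (∀ β : ℝ, 0 < β →
          max (max s (s * β)) (s / 2 * (β + 1)) ≤ |ax - β * ay| + |bx - β * bY|) ∧
        (∀ β : ℝ, 0 < β →
          max (max s (s * β)) (s / 2 * (β + 1)) ≤ |ay - β * ax| + |bY - β * bx|) := by
  rintro ⟨ax, bx, ay, bY, s, hspos, hs1, hx, hy, hsub, hadd, hc1, hc2⟩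
  have hA : |ax + ay| = |ax| + |ay| := by
    have := abs_add_le ax ay; have := abs_add_le bx bY; linarith
  have hB : |bx + bY| = |bx| + |bY| := by
    have := abs_add_le ax ay; have := abs_add_le bx bY; linarith
  have hA' : |ay + ax| = |ay| + |ax| := by rw [add_comm ay ax, hA]; ring
  have hB' : |bY + bx| = |bY| + |bx| := by rw [add_comm bY bx, hB]; ring
  have hsub' : |(|ax| - |ay|)| + |(|bx| - |bY|)| = s := by
    have e1 := abs_lin ax ay 1 hA zero_le_one
    have e2 := abs_lin bx bY 1 hB zero_le_one
    simp only [one_mul] at e1 e2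
    rw [← e1, ← e2]
    exact hsub
  have hc1' : ∀ β : ℝ, 0 < β →
      max (max s (s * β)) (s / 2 * (β + 1)) ≤ |(|ax| - β * |ay|)| + |(|bx| - β * |bY|)| := by
    intro β hβ
    rw [← abs_lin ax ay β hA hβ.le, ← abs_lin bx bY β hB hβ.le]
    exact hc1 β hβ
  have hc2' : ∀ β : ℝ, 0 < β →
      max (max s (s * β)) (s / 2 * (β + 1)) ≤ |(|ay| - β * |ax|)| + |(|bY| - β * |bx|)| := by
    intro β hβ
    rw [← abs_lin ay ax β hA' hβ.le, ← abs_lin bY bx β hB' hβ.le]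
    exact hc2 β hβ
  rcases le_total (|ay|) (|ax|) with h | h
  · exact aux (|ax|) (|ay|) (|bx|) (|bY|) s (abs_nonneg _) (abs_nonneg _)
      hx hy h hspos hs1 hsub' hc1'
  · refine aux (|ay|) (|ax|) (|bY|) (|bx|) s (abs_nonneg _) (abs_nonneg _)
      hy hx h hspos hs1 ?_ hc2'
    rw [abs_sub_comm (|ay|), abs_sub_comm (|bY|)]
    exact hsub'
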